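/- Let 0 < c_1 < c_2 < ... be a strictly increasing sequence of positive reals and define e_n(t) = exp[0, c_1 t, ..., c_n t] for t > 0 (the divided difference of the exponential). Then for all n ≥ 1 and t > 0: t·e_n'(t) = e_n(t)(c_n t − n) + e_{n−1}(t). -/

import Mathlib

/-- Divided difference at points `a 0, ..., a n`, defined recursively. -/
noncomputable def divDiff (f : ℝ → ℝ) : ℕ → (ℕ → ℝ) → ℝ
  | 0, a => f (a 0)
  | (n+1), a => (divDiff f n (fun i => a (i+1)) - divDiff f n a) / (a (n+1) - a 0)

lemma divDiff_exp_hasDerivAt : ∀ (m : ℕ) (c : ℕ → ℝ), StrictMono c → ∀ t : ℝ, t ≠ 0 →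
    HasDerivAt (fun s => divDiff Real.exp (m + 1) (fun i => c i * s))
      ((divDiff Real.exp (m + 1) (fun i => c i * t) * (c (m + 1) * t - ((m + 1 : ℕ) : ℝ)) +
        divDiff Real.exp m (fun i => c i * t)) / t) t := by
  intro m
  induction m with
  | zero =>
    intro c hc t ht
    have hne : c 1 * t - c 0 * t ≠ 0 := by
      have h : c 1 * t - c 0 * t = (c 1 - c 0) * t := by ring
      rw [h]
      exact mul_ne_zero (sub_ne_zero.mpr (hc one_pos).ne') ht
    have h0 : HasDerivAt (fun s : ℝ => c 0 * s) (c 0) t := by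
      simpa using (hasDerivAt_id t).const_mul (c 0)
    have h1 : HasDerivAt (fun s : ℝ => c 1 * s) (c 1) t := by
      simpa using (hasDerivAt_id t).const_mul (c 1)
    have h : HasDerivAt (fun s => (Real.exp (c 1 * s) - Real.exp (c 0 * s)) / (c 1 * s - c 0 * s)) _ t :=
      ((h1.exp).sub (h0.exp)).div (h1.sub h0) hne
    have hfun : (fun s => divDiff Real.exp (0 + 1) (fun i => c i * s)) =
        fun s => (Real.exp (c 1 * s) - Real.exp (c 0 * s)) / (c 1 * s - c 0 * s) := by
      funext s; simp [divDiff]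
    rw [hfun]
    convert h using 1
    simp only [divDiff, Pi.sub_apply]
    push_cast
    have hd : c 1 - c 0 ≠ 0 := sub_ne_zero.mpr (hc one_pos).ne'
    field_simp
    ring
  | succ m ih =>
    intro c hc t ht
    have hcs : StrictMono (fun i => c (i + 1)) := fun i j h => hc (by omega)
    have hF := ih c hc t ht
    have hH := ih (fun i => c (i + 1)) hcs t ht
    have hden : HasDerivAt (fun s : ℝ => c (m + 1 + 1) * s - c 0 * s) (c (m + 1 + 1) - c 0) t := by
      simpa [Pi.sub_def] using ((hasDerivAt_id t).const_mul (c (m + 1 + 1))).sub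
        ((hasDerivAt_id t).const_mul (c 0))
    have hne : c (m + 1 + 1) * t - c 0 * t ≠ 0 := by
      have h : c (m + 1 + 1) * t - c 0 * t = (c (m + 1 + 1) - c 0) * t := by ring
      rw [h]
      exact mul_ne_zero (sub_ne_zero.mpr (hc (by omega)).ne') ht
    have hne1 : c (m + 1) * t - c 0 * t ≠ 0 := by
      have h : c (m + 1) * t - c 0 * t = (c (m + 1) - c 0) * t := by ring
      rw [h]
      exact mul_ne_zero (sub_ne_zero.mpr (hc (by omega)).ne') ht
    have hne2 : c (m + 1 + 1) * t - c 1 * t ≠ 0 := by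
      have h : c (m + 1 + 1) * t - c 1 * t = (c (m + 1 + 1) - c 1) * t := by ring
      rw [h]
      exact mul_ne_zero (sub_ne_zero.mpr (hc (by omega)).ne') ht
    have h : HasDerivAt (fun s => (divDiff Real.exp (m + 1) (fun i => c (i + 1) * s) -
        divDiff Real.exp (m + 1) (fun i => c i * s)) / (c (m + 1 + 1) * s - c 0 * s)) _ t :=
      (hH.sub hF).div hden hne
    have hfun : (fun s => divDiff Real.exp (m + 1 + 1) (fun i => c i * s)) =
        fun s => (divDiff Real.exp (m + 1) (fun i => c (i + 1) * s) -
          divDiff Real.exp (m + 1) (fun i => c i * s)) / (c (m + 1 + 1) * s - c 0 * s) := by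
      funext s; simp [divDiff]
    rw [hfun]
    convert h using 1
    simp only [divDiff, Pi.sub_apply]
    push_cast
    have hd1 : c (m + 1 + 1) - c 0 ≠ 0 := sub_ne_zero.mpr (hc (by omega)).ne'
    have hd2 : c (m + 1) - c 0 ≠ 0 := sub_ne_zero.mpr (hc (by omega)).ne'
    have hd3 : c (m + 1 + 1) - c 1 ≠ 0 := sub_ne_zero.mpr (hc (by omega)).ne'
    generalize divDiff Real.exp m (fun i => c (i + 1 + 1) * t) = A
    generalize divDiff Real.exp m (fun i => c (i + 1) * t) = B
    generalize divDiff Real.exp m (fun i => c i * t) = C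
    field_simp
    ring

/-- The differential recurrence `t eₙ'(t) = eₙ(t)(cₙt − n) + eₙ₋₁(t)` for
`eₙ(t) = exp[0, c₁t, ..., cₙt]` with `0 = c₀ < c₁ < c₂ < ⋯`. -/
theorem divDiff_exp_ode (c : ℕ → ℝ) (hc0 : c 0 = 0) (hmono : StrictMono c)
    (n : ℕ) (hn : 1 ≤ n) (t : ℝ) (ht : 0 < t) :
    t * deriv (fun s => divDiff Real.exp n (fun i => c i * s)) t =
      divDiff Real.exp n (fun i => c i * t) * (c n * t - n) +
        divDiff Real.exp (n - 1) (fun i => c i * t) := by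
  obtain ⟨m, rfl⟩ : ∃ m, n = m + 1 := ⟨n - 1, (Nat.succ_pred_eq_of_pos hn).symm⟩
  have h := divDiff_exp_hasDerivAt m c hmono t ht.ne'
  rw [h.deriv, mul_comm, div_mul_cancel₀ _ ht.ne']
  norm_num
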